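/- If strictly more than half of the leaves of a 1-fault NAND tree of depth n have value 1, then the root has value 1 if n is even and value 0 if n is odd. -/

import Mathlib

/-- A complete binary NAND tree of depth `n`: leaves hold bits, each internal
node's value is the NAND of its children's values. -/
inductive NandTree : ℕ → Type where
  | leaf : Bool → NandTree 0
  | node {n : ℕ} : NandTree n → NandTree n → NandTree (n + 1)

/-- The value of (the root of) a NAND tree. -/
def NandTree.val : ∀ {n : ℕ}, NandTree n → Bool
  | _, .leaf b => b
  | _, .node l r => !(l.val && r.val)

/-- The list of leaf values, in left-to-right order. -/
def NandTree.leaves : ∀ {n : ℕ}, NandTree n → List Bool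
  | _, .leaf b => [b]
  | _, .node l r => l.leaves ++ r.leaves

/-- The tree contains no fault nodes: every internal node's two children
have equal values. -/
def NandTree.noFault : ∀ {n : ℕ}, NandTree n → Prop
  | _, .leaf _ => True
  | _, .node l r => l.val = r.val ∧ l.noFault ∧ r.noFault

/-- The quantity κ: 0 at leaves; at a trivial node, the max of the children's κ;
at a fault node, 1 plus the κ of the 0-valued child. -/
def NandTree.kappa : ∀ {n : ℕ}, NandTree n → ℕ
  | _, .leaf _ => 0
  | _, .node l r =>
      if l.val = r.val then max l.kappa r.kappa
      else if l.val = false then 1 + l.kappa else 1 + r.kappa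

/-- The 1-fault condition: κ(v) ≤ 1 at every node of the tree. -/
def NandTree.oneFault : ∀ {n : ℕ}, NandTree n → Prop
  | _, .leaf _ => True
  | _, .node l r => (NandTree.node l r).kappa ≤ 1 ∧ l.oneFault ∧ r.oneFault


lemma NandTree.leaves_length {n : ℕ} (t : NandTree n) : t.leaves.length = 2 ^ n := by
  induction t with
  | leaf b => simp [NandTree.leaves]
  | node l r ihl ihr =>
    simp [NandTree.leaves, ihl, ihr, pow_succ]; ring

lemma NandTree.count_le {n : ℕ} (t : NandTree n) : t.leaves.count true ≤ 2 ^ n := by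
  rw [← t.leaves_length]; exact List.count_le_length

lemma NandTree.noFault_of_kappa {n : ℕ} (t : NandTree n) (h : t.kappa = 0) :
    t.noFault := by
  induction t with
  | leaf b => trivial
  | node l r ihl ihr =>
    by_cases hv : l.val = r.val
    · rw [NandTree.kappa, if_pos hv] at h
      exact ⟨hv, ihl (by omega), ihr (by omega)⟩
    · rw [NandTree.kappa, if_neg hv] at h
      split at h <;> omega

lemma NandTree.noFault_count {n : ℕ} (t : NandTree n) (h : t.noFault) :
    t.leaves.count true = if t.val = decide (n % 2 = 0) then 2 ^ n else 0 := by
  induction t with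
  | leaf b => cases b <;> simp [NandTree.leaves, NandTree.val]
  | @node m l r ihl ihr =>
    obtain ⟨hv, hl, hr⟩ := h
    rw [NandTree.leaves, List.count_append, ihl hl, ihr hr, ← hv]
    rcases Nat.mod_two_eq_zero_or_one m with hn | hn
    · have hn1 : (m + 1) % 2 = 1 := by omega
      cases hlv : l.val <;>
        simp [NandTree.val, hn, hn1, hlv, ← hv, pow_succ, two_mul] <;> ring
    · have hn1 : (m + 1) % 2 = 0 := by omega
      cases hlv : l.val <;>
        simp [NandTree.val, hn, hn1, hlv, ← hv, pow_succ, two_mul] <;> ring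

/-- If strictly more than half of the leaves of a 1-fault NAND tree of
depth n have value 1, the root has value 1 for even n and 0 for odd n. -/
theorem oneFault_majority_true {n : ℕ} (t : NandTree n) (h1 : t.oneFault)
    (hmaj : 2 ^ n < 2 * t.leaves.count true) :
    t.val = decide (n % 2 = 0) := by
  induction t with
  | leaf b =>
    simp only [NandTree.leaves] at hmaj
    have : b = true := by
      cases b
      · simp at hmaj
      · rfl
    simp [NandTree.val, this]
  | @node m l r ihl ihr =>
    obtain ⟨hk, hl, hr⟩ := h1
    rw [NandTree.leaves, List.count_append, pow_succ] at hmaj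
    have hc : 2 ^ m < 2 * l.leaves.count true ∨ 2 ^ m < 2 * r.leaves.count true := by
      omega
    by_cases hv : l.val = r.val
    · have hval : l.val = decide (m % 2 = 0) := by
        rcases hc with hc | hc
        · exact ihl hl hc
        · rw [hv]; exact ihr hr hc
      rcases Nat.mod_two_eq_zero_or_one m with hn | hn
      · have hn1 : (m + 1) % 2 = 1 := by omega
        simp [NandTree.val, ← hv, hval, hn, hn1]
      · have hn1 : (m + 1) % 2 = 0 := by omega
        simp [NandTree.val, ← hv, hval, hn, hn1]
    · rw [NandTree.kappa, if_neg hv] at hk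
      have hodd : m % 2 = 1 := by
        by_contra hne
        have hn : m % 2 = 0 := by omega
        cases hlv : l.val with
        | false =>
          have hk0 : l.kappa = 0 := by rw [hlv] at hk; simp at hk; omega
          have := l.noFault_count (l.noFault_of_kappa hk0)
          rw [hlv, hn] at this
          simp at this
          have := r.count_le
          omega
        | true =>
          have hrv : r.val = false := by
            cases hrv : r.val
            · rfl
            · exact absurd (hlv.trans hrv.symm) hv
          have hk0 : r.kappa = 0 := by rw [hlv] at hk; simp at hk; omega
          have := r.noFault_count (r.noFault_of_kappa hk0)
          rw [hrv, hn] at this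
          simp at this
          have := l.count_le
          omega
      have hn1 : (m + 1) % 2 = 0 := by omega
      have hfalse : l.val = false ∨ r.val = false := by
        cases hlv : l.val
        · exact Or.inl rfl
        · cases hrv : r.val
          · exact Or.inr rfl
          · exact absurd (hlv.trans hrv.symm) hv
      rcases hfalse with hf | hf <;> simp [NandTree.val, hf, hn1]
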